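/- Let α, β ∈ ℝ and c, c' ∈ [0, 1]. The z-disk Dz(α, c) and the w-disk Dw(β, c') have nonempty intersection if and only if c² + c'² ≥ 1. (A z-disk of radius c and a w-disk of radius c' intersect only when c² + c'² ≥ 1.) -/

import Mathlib

/-- The z-disk of radius `c` centered at angle `θ` in the unit 3-sphere
`S³ = {(z,w) ∈ ℂ² : |z|² + |w|² = 1}`. -/
def Dz (θ c : ℝ) : Set (ℂ × ℂ) :=
  {x : ℂ × ℂ | ‖x.1‖ ^ 2 + ‖x.2‖ ^ 2 = 1 ∧ ‖x.2‖ ≤ c ∧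
    ∃ r : ℝ, 0 ≤ r ∧ x.1 = (r : ℂ) * Complex.exp (θ * Complex.I)}

/-- The w-disk of radius `c` centered at angle `θ` in the unit 3-sphere. -/
def Dw (θ c : ℝ) : Set (ℂ × ℂ) :=
  {x : ℂ × ℂ | ‖x.1‖ ^ 2 + ‖x.2‖ ^ 2 = 1 ∧ ‖x.1‖ ≤ c ∧
    ∃ s : ℝ, 0 ≤ s ∧ x.2 = (s : ℂ) * Complex.exp (θ * Complex.I)}

/-- A z-disk of radius `c` and a w-disk of radius `c'` intersect if and only if
`c² + c'² ≥ 1`. -/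
theorem zdisk_wdisk_intersect_iff
    (α β : ℝ) (c c' : ℝ) (hc : c ∈ Set.Icc (0 : ℝ) 1) (hc' : c' ∈ Set.Icc (0 : ℝ) 1) :
    (Dz α c ∩ Dw β c').Nonempty ↔ 1 ≤ c ^ 2 + c' ^ 2 := by
  constructor
  · rintro ⟨⟨z, w⟩, ⟨hs, hw, _⟩, _, hz, _⟩
    have h1 : ‖z‖ ^ 2 ≤ c' ^ 2 := by
      have := norm_nonneg z
      nlinarith
    have h2 : ‖w‖ ^ 2 ≤ c ^ 2 := by
      have := norm_nonneg w
      nlinarith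
    nlinarith
  · intro h
    refine ⟨(Real.sqrt (1 - c ^ 2) * Complex.exp (α * Complex.I),
        (c : ℂ) * Complex.exp (β * Complex.I)), ?_, ?_⟩
    · have hs : Real.sqrt (1 - c ^ 2) ^ 2 = 1 - c ^ 2 :=
        Real.sq_sqrt (by nlinarith [hc.1, hc.2])
      refine ⟨?_, ?_, Real.sqrt (1 - c ^ 2), Real.sqrt_nonneg _, rfl⟩
      · simp [map_mul, Complex.norm_exp, Complex.norm_real, abs_of_nonneg (Real.sqrt_nonneg _),
          abs_of_nonneg hc.1]
        linarith [hs]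
      · simp [map_mul, Complex.norm_exp, Complex.norm_real, abs_of_nonneg hc.1]
    · have hs : Real.sqrt (1 - c ^ 2) ^ 2 = 1 - c ^ 2 :=
        Real.sq_sqrt (by nlinarith [hc.1, hc.2])
      refine ⟨?_, ?_, c, hc.1, rfl⟩
      · simp [map_mul, Complex.norm_exp, Complex.norm_real, abs_of_nonneg (Real.sqrt_nonneg _),
          abs_of_nonneg hc.1]
        linarith [hs]
      · simp [map_mul, Complex.norm_exp, Complex.norm_real, abs_of_nonneg (Real.sqrt_nonneg _)]
        exact Real.sqrt_le_sqrt (show 1 - c ^ 2 ≤ c' ^ 2 by nlinarith) |>.trans (by rw [Real.sqrt_sq hc'.1])
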